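/- Assume R₀ > 1, ε ∈ [0,1], u, q > 0, and c > 0 with 1 - 1/R₁ < c/(1+q) < 1 - 1/R₀, where R₁ = (1 - (u/(1+u))·((1+εq)/(1+q)))·R₀ and R₁ > 0. Then x* := ((1+u)/u)·((1+q)/(1+εq))·(1 - 1/(R₀(1 - c/(1+q)))) satisfies 0 < x* < 1. -/

import Mathlib

/-- Under the EPC existence condition `1 - 1/R₁ < c/(1+q) < 1 - 1/R₀` (with
`R₀ > 1`, `ε ∈ [0,1]`, `u, q, c > 0`, `R₁ > 0`), the equilibrium compliance
`x* = ((1+u)/u)·((1+q)/(1+εq))·(1 - 1/(R₀(1 - c/(1+q))))` lies in `(0,1)`. -/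
theorem stmt_4 (R₀ ε u q c : ℝ) (hR₀ : 1 < R₀) (hε0 : 0 ≤ ε) (hε1 : ε ≤ 1)
    (hu : 0 < u) (hq : 0 < q) (hc : 0 < c)
    (hR₁pos : 0 < (1 - (u / (1 + u)) * ((1 + ε * q) / (1 + q))) * R₀)
    (hlow : 1 - 1 / ((1 - (u / (1 + u)) * ((1 + ε * q) / (1 + q))) * R₀) < c / (1 + q))
    (hhigh : c / (1 + q) < 1 - 1 / R₀) :
    0 < ((1 + u) / u) * ((1 + q) / (1 + ε * q)) * (1 - 1 / (R₀ * (1 - c / (1 + q)))) ∧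
    ((1 + u) / u) * ((1 + q) / (1 + ε * q)) * (1 - 1 / (R₀ * (1 - c / (1 + q)))) < 1 := by
  have hR0 : (0:ℝ) < R₀ := by linarith
  have hq1 : (0:ℝ) < 1 + q := by linarith
  have hu1 : (0:ℝ) < 1 + u := by linarith
  have heq : (0:ℝ) < 1 + ε * q := by positivity
  set a := c / (1 + q) with ha
  set k := (u / (1 + u)) * ((1 + ε * q) / (1 + q)) with hkdef
  have hkpos : 0 < k := by positivity
  have hkl : k < 1 := by
    by_contra h
    push_neg at h
    nlinarith [hR₁pos]
  have h1a : 0 < 1 - a := by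
    have : 0 < 1 / R₀ := by positivity
    linarith
  have h2 : 1 < R₀ * (1 - a) := by
    have : 1 / R₀ < 1 - a := by linarith
    calc 1 = R₀ * (1/R₀) := by field_simp
    _ < R₀ * (1 - a) := by exact mul_lt_mul_of_pos_left this hR0
  have hden : 0 < R₀ * (1 - a) := by linarith
  have hfac : 0 < 1 - 1 / (R₀ * (1 - a)) := by
    have : 1 / (R₀ * (1 - a)) < 1 := by
      rw [div_lt_one hden]; exact h2
    linarith
  have hkR : 0 < (1 - k) * R₀ := hR₁pos
  have hkey : (1 - k) * (R₀ * (1 - a)) < 1 := by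
    have h3 : 1 - a < 1 / ((1 - k) * R₀) := by linarith
    calc (1 - k) * (R₀ * (1 - a)) = ((1 - k) * R₀) * (1 - a) := by ring
    _ < ((1 - k) * R₀) * (1 / ((1 - k) * R₀)) := mul_lt_mul_of_pos_left h3 hkR
    _ = 1 := mul_one_div_cancel hkR.ne'
  have hkey2 : 1 - 1 / (R₀ * (1 - a)) < k := by
    have : 1 - k < 1 / (R₀ * (1 - a)) := by
      rw [lt_div_iff₀ hden]; nlinarith
    linarith
  have hinv : ((1 + u) / u) * ((1 + q) / (1 + ε * q)) = 1 / k := by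
    rw [hkdef]; field_simp
  constructor
  · positivity
  · rw [hinv, div_mul_eq_mul_div, div_lt_one hkpos, one_mul]
    exact hkey2
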